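/- Let G be the presented group ⟨a, b, c | r₁, r₂, r₃⟩ where r₁ = a·c·b⁻¹·a⁻¹·c⁻¹·a·c·b·c⁻¹, r₂ = a·a·b⁻¹·c·b·a·b·c⁻¹, r₃ = a·b·a⁻¹·b⁻¹·c·c. Then G is not isomorphic to the cyclic group of order 2. -/
import Mathlib


namespace Stmt2

/-- The generator `a` of the free group on three generators. -/
def a : FreeGroup (Fin 3) := FreeGroup.of 0
/-- The generator `b` of the free group on three generators. -/
def b : FreeGroup (Fin 3) := FreeGroup.of 1
/-- The generator `c` of the free group on three generators. -/
def c : FreeGroup (Fin 3) := FreeGroup.of 2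

/-- The relator `r₁ = a·c·b⁻¹·a⁻¹·c⁻¹·a·c·b·c⁻¹`. -/
def r₁ : FreeGroup (Fin 3) := a * c * b⁻¹ * a⁻¹ * c⁻¹ * a * c * b * c⁻¹
/-- The relator `r₂ = a·a·b⁻¹·c·b·a·b·c⁻¹`. -/
def r₂ : FreeGroup (Fin 3) := a * a * b⁻¹ * c * b * a * b * c⁻¹
/-- The relator `r₃ = a·b·a⁻¹·b⁻¹·c·c`. -/
def r₃ : FreeGroup (Fin 3) := a * b * a⁻¹ * b⁻¹ * c * c

/-- A map sending the generators into `S₃`. -/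
def f : Fin 3 → Equiv.Perm (Fin 3) := ![1, finRotate 3, Equiv.swap 0 1]

lemma f_rels : ∀ r ∈ ({r₁, r₂, r₃} : Set (FreeGroup (Fin 3))),
    FreeGroup.lift f r = 1 := by
  intro r hr
  rcases hr with h | h | h <;> subst h <;>
    simp only [r₁, r₂, r₃, a, b, c, map_mul, map_inv, FreeGroup.lift_apply_of] <;>
    decide

/-- The induced homomorphism to `S₃`. -/
def φ : PresentedGroup ({r₁, r₂, r₃} : Set (FreeGroup (Fin 3))) →*
    Equiv.Perm (Fin 3) := PresentedGroup.toGroup f_rels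

/-- The presented group `⟨a, b, c | r₁, r₂, r₃⟩` is not isomorphic to the
cyclic group of order 2. -/
theorem presented_group_not_iso_zmod_two :
    ¬ Nonempty
        (PresentedGroup ({r₁, r₂, r₃} : Set (FreeGroup (Fin 3))) ≃*
          Multiplicative (ZMod 2)) := by
  rintro ⟨e⟩
  set g : PresentedGroup ({r₁, r₂, r₃} : Set (FreeGroup (Fin 3))) :=
    PresentedGroup.of 1 with hg
  have hsq : g * g = 1 := by
    apply e.injective
    rw [map_mul, map_one]
    exact (by decide : ∀ x : Multiplicative (ZMod 2), x * x = 1) _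
  have : φ g * φ g = 1 := by rw [← map_mul, hsq, map_one]
  have hφg : φ g = finRotate 3 := by
    rw [hg]
    exact PresentedGroup.toGroup.of f_rels
  rw [hφg] at this
  exact absurd this (by decide)

end Stmt2
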